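/- If X(G1) and X(G2) are pure n-dimensional, (n+1)-partite, strongly gallery connected clique complexes, then the clique complex of the partite product G1 ⊛ G2 is again a pure n-dimensional, (n+1)-partite, strongly gallery connected clique complex; in particular G1 ⊛ G2 is connected. -/

import Mathlib

/-- The common neighborhood (link vertex set) of a set of vertices. -/
def commonNbrs {V : Type*} (G : SimpleGraph V) (s : Set V) : Set V :=
  {v | ∀ u ∈ s, G.Adj u v}

/-- The partite product of two partite graphs. -/
def partiteProd {V1 V2 : Type*} {nn : ℕ} (t1 : V1 → Fin nn) (t2 : V2 → Fin nn)
    (G1 : SimpleGraph V1) (G2 : SimpleGraph V2) :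
    SimpleGraph {p : V1 × V2 // t1 p.1 = t2 p.2} where
  Adj x y := G1.Adj x.val.1 y.val.1 ∧ G2.Adj x.val.2 y.val.2
  symm := ⟨fun _ _ h => ⟨h.1.symm, h.2.symm⟩⟩
  loopless := ⟨fun _ h => G1.loopless.irrefl _ h.1⟩

/-- The clique complex of `G` is pure `n`-dimensional: every clique is contained in a clique of
size `n + 1`. -/
def IsPure {V : Type*} (G : SimpleGraph V) (n : ℕ) : Prop :=
  ∀ s : Finset V, G.IsClique (s : Set V) →
    ∃ t : Finset V, s ⊆ t ∧ G.IsClique (t : Set V) ∧ t.card = n + 1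

/-- The clique complex of `G` (of dimension `n`) is strongly gallery connected: `G` is connected
and the 1-skeleton of the link of every face of dimension at most `n - 2` (i.e. every clique of
size at most `n - 1`, including the empty one) is connected. -/
def StronglyGalleryConnected {V : Type*} (G : SimpleGraph V) (n : ℕ) : Prop :=
  G.Connected ∧
  ∀ s : Finset V, G.IsClique (s : Set V) → s.card ≤ n - 1 →
    (G.induce (commonNbrs G (s : Set V))).Connected

/-- Extension property: every clique has a common neighbor of any prescribed color
(colors being witnessed by vertices of an auxiliary type) not among its own colors. -/
def ExtProp {V V' : Type*} {N : ℕ} (t : V → Fin N) (t' : V' → Fin N) (G : SimpleGraph V) : Prop :=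
  ∀ u : Finset V, G.IsClique (u : Set V) → ∀ y : V', t' y ∉ u.image t →
    ∃ w : V, t w = t' y ∧ ∀ v ∈ u, G.Adj v w

section walklemmas
variable {V1 V2 : Type*} {N : ℕ} {t1 : V1 → Fin N} {t2 : V2 → Fin N}
  {G1 : SimpleGraph V1} {G2 : SimpleGraph V2}

/-- Companion walk: follow a walk in `G1`, accompanying it in `G2`. -/
lemma lemA (hp1 : ∀ a b, G1.Adj a b → t1 a ≠ t1 b) (he2 : ExtProp t2 t1 G2)
    {a a' : V1} (w : G1.Walk a a') :
    ∀ (b : V2) (hb : t1 a = t2 b),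
      ∃ b' : V2, ∃ hb' : t1 a' = t2 b',
        (partiteProd t1 t2 G1 G2).Reachable ⟨(a, b), hb⟩ ⟨(a', b'), hb'⟩ := by
  induction w with
  | nil => exact fun b hb => ⟨b, hb, .refl _⟩
  | @cons a a₁ a' h p ih =>
    intro b hb
    have hne : t1 a₁ ∉ ({b} : Finset V2).image t2 := by
      simp only [Finset.image_singleton, Finset.mem_singleton]
      exact fun hh => hp1 a a₁ h (hb.trans hh.symm)
    obtain ⟨b₁, hb₁, hadj⟩ := he2 {b} (by simp) a₁ hne
    have hedge : (partiteProd t1 t2 G1 G2).Adj ⟨(a, b), hb⟩ ⟨(a₁, b₁), hb₁.symm⟩ :=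
      ⟨h, hadj b (Finset.mem_singleton_self b)⟩
    obtain ⟨b', hb', hr⟩ := ih b₁ hb₁.symm
    exact ⟨b', hb', hedge.reachable.trans hr⟩

/-- Rocking walk: change the second coordinate along a walk in `G2`, keeping the first
coordinate in the closed neighborhood of a fixed vertex `a'`. -/
lemma lemB (hp1 : ∀ a b, G1.Adj a b → t1 a ≠ t1 b) (hp2 : ∀ a b, G2.Adj a b → t2 a ≠ t2 b)
    (he1 : ExtProp t1 t2 G1) (a' : V1) {x y : V2} (w : G2.Walk x y) :
    ∀ (u : V1), (u = a' ∨ G1.Adj a' u) → ∀ (hux : t1 u = t2 x) (hy : t1 a' = t2 y),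
      (partiteProd t1 t2 G1 G2).Reachable ⟨(u, x), hux⟩ ⟨(a', y), hy⟩ := by
  induction w with
  | nil =>
    intro u hu hux hy
    have huu : u = a' := by
      rcases hu with rfl | hadj
      · rfl
      · exact absurd (hy.trans hux.symm) (hp1 a' u hadj)
    subst huu
    exact .refl _
  | @cons x x₁ y h p ih =>
    intro u hu hux hy
    classical
    by_cases hcol : t2 x₁ = t1 a'
    · have hune : u ≠ a' := by
        rintro rfl
        exact hp2 x x₁ h (hux.symm.trans hcol.symm)
      have hadj : G1.Adj a' u := hu.resolve_left hune
      have hedge : (partiteProd t1 t2 G1 G2).Adj ⟨(u, x), hux⟩ ⟨(a', x₁), hcol.symm⟩ :=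
        ⟨hadj.symm, h⟩
      exact hedge.reachable.trans (ih a' (Or.inl rfl) hcol.symm hy)
    · rcases hu with rfl | hadj
      · have hne : t2 x₁ ∉ ({u} : Finset V1).image t1 := by
          simp only [Finset.image_singleton, Finset.mem_singleton]
          exact hcol
        obtain ⟨u₁, hu₁, hadj₁⟩ := he1 {u} (by simp) x₁ hne
        have hedge : (partiteProd t1 t2 G1 G2).Adj ⟨(u, x), hux⟩ ⟨(u₁, x₁), hu₁⟩ :=
          ⟨hadj₁ u (Finset.mem_singleton_self u), h⟩
        exact hedge.reachable.trans (ih u₁ (Or.inr (hadj₁ u (Finset.mem_singleton_self u))) hu₁ hy)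
      · have hclique : G1.IsClique (({a', u} : Finset V1) : Set V1) := by
          rw [Finset.coe_insert, Finset.coe_singleton]
          exact SimpleGraph.IsClique.insert (by simp) (fun b hb _ => hb ▸ hadj)
        have hne : t2 x₁ ∉ ({a', u} : Finset V1).image t1 := by
          simp only [Finset.image_insert, Finset.image_singleton, Finset.mem_insert,
            Finset.mem_singleton]
          rintro (hh | hh)
          · exact hcol hh
          · exact hp2 x x₁ h (hux.symm.trans hh.symm)
        obtain ⟨u₁, hu₁, hadj₁⟩ := he1 {a', u} hclique x₁ hne
        have hedge : (partiteProd t1 t2 G1 G2).Adj ⟨(u, x), hux⟩ ⟨(u₁, x₁), hu₁⟩ :=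
          ⟨hadj₁ u (by simp), h⟩
        exact hedge.reachable.trans (ih u₁ (Or.inr (hadj₁ a' (by simp))) hu₁ hy)

/-- Connectivity of the partite product. -/
lemma prodConn (hp1 : ∀ a b, G1.Adj a b → t1 a ≠ t1 b) (hp2 : ∀ a b, G2.Adj a b → t2 a ≠ t2 b)
    (he1 : ExtProp t1 t2 G1) (he2 : ExtProp t2 t1 G2)
    (hc1 : G1.Connected) (hc2 : G2.Connected) :
    (partiteProd t1 t2 G1 G2).Connected := by
  rw [SimpleGraph.connected_iff]
  constructor
  · rintro ⟨⟨a, b⟩, hab⟩ ⟨⟨a', b'⟩, hab'⟩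
    obtain ⟨w1⟩ := hc1.preconnected a a'
    obtain ⟨bm, hbm, hr1⟩ := lemA hp1 he2 w1 b hab
    obtain ⟨w2⟩ := hc2.preconnected bm b'
    exact hr1.trans (lemB hp1 hp2 he1 a' w2 a' (Or.inl rfl) hbm hab')
  · obtain ⟨a⟩ := hc1.nonempty
    obtain ⟨b, hb, -⟩ := he2 ∅ (by simp) a (by simp)
    exact ⟨⟨(a, b), hb.symm⟩⟩

end walklemmas

section purestuff
variable {V : Type*} {n : ℕ} {t : V → Fin (n + 1)} {G : SimpleGraph V}

lemma clique_injOn (hp : ∀ a b, G.Adj a b → t a ≠ t b) {T : Set V} (hT : G.IsClique T) :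
    Set.InjOn t T := fun x hx y hy hxy => by
  by_contra hne
  exact hp x y (hT hx hy hne) hxy

lemma rainbow (hp : ∀ a b, G.Adj a b → t a ≠ t b) {T : Finset V}
    (hT : G.IsClique (T : Set V)) (hcard : T.card = n + 1) (c : Fin (n + 1)) :
    ∃ a ∈ T, t a = c := by
  classical
  have huniv : T.image t = Finset.univ := by
    apply Finset.eq_univ_of_card
    rw [Finset.card_image_of_injOn (clique_injOn hp hT), hcard, Fintype.card_fin]
  obtain ⟨a, haT, hac⟩ := Finset.mem_image.mp (huniv ▸ Finset.mem_univ c)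
  exact ⟨a, haT, hac⟩

/-- Purity gives the extension property. -/
lemma extOfPure {V' : Type*} {t' : V' → Fin (n + 1)}
    (hp : ∀ a b, G.Adj a b → t a ≠ t b) (hpure : IsPure G n) : ExtProp t t' G := by
  intro u hu y hy
  obtain ⟨T, hsub, hTc, hTcard⟩ := hpure u hu
  obtain ⟨w, hwT, hwc⟩ := rainbow hp hTc hTcard (t' y)
  refine ⟨w, hwc, fun v hv => ?_⟩
  exact hTc (hsub hv) hwT (fun hh => hy (Finset.mem_image.mpr ⟨v, hv, hh ▸ hwc⟩))

end purestuff

section prodpure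
variable {V1 V2 : Type*} {n : ℕ} {t1 : V1 → Fin (n + 1)} {t2 : V2 → Fin (n + 1)}
  {G1 : SimpleGraph V1} {G2 : SimpleGraph V2}

/-- Purity of the partite product. -/
lemma prodPure (hp1 : ∀ a b, G1.Adj a b → t1 a ≠ t1 b) (hp2 : ∀ a b, G2.Adj a b → t2 a ≠ t2 b)
    (hpure1 : IsPure G1 n) (hpure2 : IsPure G2 n) :
    IsPure (partiteProd t1 t2 G1 G2) n := by
  classical
  intro s hs
  have hs1 : G1.IsClique ((s.image (fun p => p.val.1) : Finset V1) : Set V1) := by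
    rw [Finset.coe_image]
    rintro x ⟨p, hp, rfl⟩ y ⟨q, hq, rfl⟩ hxy
    exact (hs hp hq (fun hh => hxy (by rw [hh]))).1
  have hs2 : G2.IsClique ((s.image (fun p => p.val.2) : Finset V2) : Set V2) := by
    rw [Finset.coe_image]
    rintro x ⟨p, hp, rfl⟩ y ⟨q, hq, rfl⟩ hxy
    exact (hs hp hq (fun hh => hxy (by rw [hh]))).2
  obtain ⟨T1, hsub1, hT1c, hT1card⟩ := hpure1 _ hs1
  obtain ⟨T2, hsub2, hT2c, hT2card⟩ := hpure2 _ hs2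
  choose a ha1 ha2 using rainbow hp1 hT1c hT1card
  choose b hb1 hb2 using rainbow hp2 hT2c hT2card
  set g : Fin (n + 1) → {p : V1 × V2 // t1 p.1 = t2 p.2} :=
    fun c => ⟨(a c, b c), by rw [ha2, hb2]⟩ with hg
  refine ⟨Finset.univ.image g, ?_, ?_, ?_⟩
  · intro p hp
    have hmem1 : p.val.1 ∈ T1 := hsub1 (Finset.mem_image_of_mem _ hp)
    have hmem2 : p.val.2 ∈ T2 := hsub2 (Finset.mem_image_of_mem _ hp)
    refine Finset.mem_image.mpr ⟨t1 p.val.1, Finset.mem_univ _, ?_⟩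
    have e1 : a (t1 p.val.1) = p.val.1 :=
      clique_injOn hp1 hT1c (ha1 _) hmem1 (ha2 _)
    have e2 : b (t1 p.val.1) = p.val.2 :=
      clique_injOn hp2 hT2c (hb1 _) hmem2 ((hb2 _).trans p.property)
    exact Subtype.ext (Prod.ext e1 e2)
  · rw [Finset.coe_image]
    rintro x ⟨c, -, rfl⟩ y ⟨d, -, rfl⟩ hxy
    have hcd : c ≠ d := fun hh => hxy (by rw [hh])
    have hane : a c ≠ a d := fun hh => hcd (by rw [← ha2 c, ← ha2 d, hh])
    have hbne : b c ≠ b d := fun hh => hcd (by rw [← hb2 c, ← hb2 d, hh])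
    exact ⟨hT1c (ha1 c) (ha1 d) hane, hT2c (hb1 c) (hb1 d) hbne⟩
  · rw [Finset.card_image_of_injective _ ?_, Finset.card_univ, Fintype.card_fin]
    intro c d hcd
    have : a c = a d := congrArg (fun p => p.val.1) hcd
    rw [← ha2 c, ← ha2 d, this]

/-- The extension property for the link graph. -/
lemma extLink [DecidableEq V1] [DecidableEq V2]
    (hp1 : ∀ a b, G1.Adj a b → t1 a ≠ t1 b)
    (hp2 : ∀ a b, G2.Adj a b → t2 a ≠ t2 b) (hpure1 : IsPure G1 n)
    (s : Finset {p : V1 × V2 // t1 p.1 = t2 p.2})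
    (hs1 : G1.IsClique ((s.image (fun p => p.val.1) : Finset V1) : Set V1)) :
    ExtProp (fun v : (commonNbrs G1 ((s.image (fun p => p.val.1) : Finset V1) : Set V1)) => t1 v.val)
      (fun v : (commonNbrs G2 ((s.image (fun p => p.val.2) : Finset V2) : Set V2)) => t2 v.val)
      (G1.induce (commonNbrs G1 ((s.image (fun p => p.val.1) : Finset V1) : Set V1))) := by
  classical
  set s1 : Finset V1 := s.image (fun p => p.val.1) with hs1def
  set s2 : Finset V2 := s.image (fun p => p.val.2) with hs2def
  intro u hu y hy
  set B : Finset V1 := s1 ∪ u.image Subtype.val with hBdef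
  have hB : G1.IsClique (B : Set V1) := by
    intro x hx z hz hxz
    simp only [hBdef, Finset.coe_union, Finset.coe_image, Set.mem_union, Set.mem_image,
      Finset.mem_coe] at hx hz
    rcases hx with hx | ⟨x₀, hx₀, rfl⟩ <;> rcases hz with hz | ⟨z₀, hz₀, rfl⟩
    · exact hs1 hx hz hxz
    · exact z₀.property x hx
    · exact (x₀.property z hz).symm
    · have hne : x₀ ≠ z₀ := fun hh => hxz (by rw [hh])
      exact hu hx₀ hz₀ hne
  have hnotin : t2 y.val ∉ B.image t1 := by
    rw [hBdef, Finset.image_union]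
    simp only [Finset.mem_union, not_or]
    constructor
    · intro hmem
      obtain ⟨q, hq, hqc⟩ := Finset.mem_image.mp hmem
      obtain ⟨p, hp, rfl⟩ := Finset.mem_image.mp hq
      have hadj : G2.Adj p.val.2 y.val :=
        y.property p.val.2 (Finset.mem_coe.mpr (Finset.mem_image_of_mem _ hp))
      exact hp2 _ _ hadj (p.property.symm.trans hqc)
    · intro hmem
      obtain ⟨q, hq, hqc⟩ := Finset.mem_image.mp hmem
      obtain ⟨q₀, hq₀, rfl⟩ := Finset.mem_image.mp hq
      exact hy (Finset.mem_image.mpr ⟨q₀, hq₀, hqc⟩)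
  obtain ⟨T, hsub, hTc, hTcard⟩ := hpure1 B hB
  obtain ⟨w, hwT, hwc⟩ := rainbow hp1 hTc hTcard (t2 y.val)
  have hadjB : ∀ v ∈ B, G1.Adj v w := by
    intro v hv
    exact hTc (hsub hv) hwT (fun hh => hnotin (Finset.mem_image.mpr ⟨v, hv, hh ▸ hwc⟩))
  have hwN : w ∈ commonNbrs G1 (s1 : Set V1) := by
    intro q hq
    exact hadjB q (Finset.mem_union_left _ (Finset.mem_coe.mp hq))
  refine ⟨⟨w, hwN⟩, hwc, fun v hv => ?_⟩
  exact hadjB v.val (Finset.mem_union_right _ (Finset.mem_image_of_mem _ hv))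

end prodpure

section mainassembly
variable {V1 V2 : Type*} {n : ℕ} {t1 : V1 → Fin (n + 1)} {t2 : V2 → Fin (n + 1)}
  {G1 : SimpleGraph V1} {G2 : SimpleGraph V2}

/-- The extension property for the link graph, second factor. -/
lemma extLink2 [DecidableEq V1] [DecidableEq V2]
    (hp1 : ∀ a b, G1.Adj a b → t1 a ≠ t1 b)
    (hp2 : ∀ a b, G2.Adj a b → t2 a ≠ t2 b) (hpure2 : IsPure G2 n)
    (s : Finset {p : V1 × V2 // t1 p.1 = t2 p.2})
    (hs2 : G2.IsClique ((s.image (fun p => p.val.2) : Finset V2) : Set V2)) :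
    ExtProp (fun v : (commonNbrs G2 ((s.image (fun p => p.val.2) : Finset V2) : Set V2)) => t2 v.val)
      (fun v : (commonNbrs G1 ((s.image (fun p => p.val.1) : Finset V1) : Set V1)) => t1 v.val)
      (G2.induce (commonNbrs G2 ((s.image (fun p => p.val.2) : Finset V2) : Set V2))) := by
  classical
  set s1 : Finset V1 := s.image (fun p => p.val.1) with hs1def
  set s2 : Finset V2 := s.image (fun p => p.val.2) with hs2def
  intro u hu y hy
  set B : Finset V2 := s2 ∪ u.image Subtype.val with hBdef
  have hB : G2.IsClique (B : Set V2) := by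
    intro x hx z hz hxz
    simp only [hBdef, Finset.coe_union, Finset.coe_image, Set.mem_union, Set.mem_image,
      Finset.mem_coe] at hx hz
    rcases hx with hx | ⟨x₀, hx₀, rfl⟩ <;> rcases hz with hz | ⟨z₀, hz₀, rfl⟩
    · exact hs2 hx hz hxz
    · exact z₀.property x hx
    · exact (x₀.property z hz).symm
    · have hne : x₀ ≠ z₀ := fun hh => hxz (by rw [hh])
      exact hu hx₀ hz₀ hne
  have hnotin : t1 y.val ∉ B.image t2 := by
    rw [hBdef, Finset.image_union]
    simp only [Finset.mem_union, not_or]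
    constructor
    · intro hmem
      obtain ⟨q, hq, hqc⟩ := Finset.mem_image.mp hmem
      obtain ⟨p, hp, rfl⟩ := Finset.mem_image.mp hq
      have hadj : G1.Adj p.val.1 y.val :=
        y.property p.val.1 (Finset.mem_coe.mpr (Finset.mem_image_of_mem _ hp))
      exact hp1 _ _ hadj (p.property.trans hqc)
    · intro hmem
      obtain ⟨q, hq, hqc⟩ := Finset.mem_image.mp hmem
      obtain ⟨q₀, hq₀, rfl⟩ := Finset.mem_image.mp hq
      exact hy (Finset.mem_image.mpr ⟨q₀, hq₀, hqc⟩)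
  obtain ⟨T, hsub, hTc, hTcard⟩ := hpure2 B hB
  obtain ⟨w, hwT, hwc⟩ := rainbow hp2 hTc hTcard (t1 y.val)
  have hadjB : ∀ v ∈ B, G2.Adj v w := by
    intro v hv
    exact hTc (hsub hv) hwT (fun hh => hnotin (Finset.mem_image.mpr ⟨v, hv, hh ▸ hwc⟩))
  have hwN : w ∈ commonNbrs G2 (s2 : Set V2) := by
    intro q hq
    exact hadjB q (Finset.mem_union_left _ (Finset.mem_coe.mp hq))
  refine ⟨⟨w, hwN⟩, hwc, fun v hv => ?_⟩
  exact hadjB v.val (Finset.mem_union_right _ (Finset.mem_image_of_mem _ hv))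

set_option maxHeartbeats 2000000 in
/-- Connectivity of links in the partite product. -/
lemma prodLink (hp1 : ∀ a b, G1.Adj a b → t1 a ≠ t1 b) (hp2 : ∀ a b, G2.Adj a b → t2 a ≠ t2 b)
    (hpure1 : IsPure G1 n) (hpure2 : IsPure G2 n)
    (hsgc1 : StronglyGalleryConnected G1 n) (hsgc2 : StronglyGalleryConnected G2 n)
    (s : Finset {p : V1 × V2 // t1 p.1 = t2 p.2})
    (hs : (partiteProd t1 t2 G1 G2).IsClique (s : Set _)) (hcard : s.card ≤ n - 1) :
    ((partiteProd t1 t2 G1 G2).induce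
      (commonNbrs (partiteProd t1 t2 G1 G2) (s : Set _))).Connected := by
  classical
  have hs1 : G1.IsClique ((s.image (fun p => p.val.1) : Finset V1) : Set V1) := by
    rw [Finset.coe_image]
    rintro x ⟨p, hp, rfl⟩ y ⟨q, hq, rfl⟩ hxy
    exact (hs hp hq (fun hh => hxy (by rw [hh]))).1
  have hs2 : G2.IsClique ((s.image (fun p => p.val.2) : Finset V2) : Set V2) := by
    rw [Finset.coe_image]
    rintro x ⟨p, hp, rfl⟩ y ⟨q, hq, rfl⟩ hxy
    exact (hs hp hq (fun hh => hxy (by rw [hh]))).2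
  have hH1 : (G1.induce (commonNbrs G1 ((s.image (fun p => p.val.1) : Finset V1) : Set V1))).Connected :=
    hsgc1.2 _ hs1 (le_trans (Finset.card_image_le) hcard)
  have hH2 : (G2.induce (commonNbrs G2 ((s.image (fun p => p.val.2) : Finset V2) : Set V2))).Connected :=
    hsgc2.2 _ hs2 (le_trans (Finset.card_image_le) hcard)
  have hconn := prodConn (t1 := fun v : (commonNbrs G1 ((s.image (fun p => p.val.1) : Finset V1) : Set V1)) => t1 v.val)
    (t2 := fun v : (commonNbrs G2 ((s.image (fun p => p.val.2) : Finset V2) : Set V2)) => t2 v.val)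
    (fun a b h => hp1 a.val b.val h) (fun a b h => hp2 a.val b.val h)
    (extLink hp1 hp2 hpure1 s hs1) (extLink2 hp1 hp2 hpure2 s hs2) hH1 hH2
  have hmap : ∀ q : {p : (commonNbrs G1 ((s.image (fun p => p.val.1) : Finset V1) : Set V1)) ×
      (commonNbrs G2 ((s.image (fun p => p.val.2) : Finset V2) : Set V2)) // t1 p.1.val = t2 p.2.val},
      (⟨(q.val.1.val, q.val.2.val), q.property⟩ : {p : V1 × V2 // t1 p.1 = t2 p.2}) ∈
        commonNbrs (partiteProd t1 t2 G1 G2) (s : Set _) := by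
    rintro q r hr
    exact ⟨q.val.1.property r.val.1 (Finset.mem_coe.mpr
        (Finset.mem_image_of_mem _ (Finset.mem_coe.mp hr))),
      q.val.2.property r.val.2 (Finset.mem_coe.mpr
        (Finset.mem_image_of_mem _ (Finset.mem_coe.mp hr)))⟩
  let f : (partiteProd (fun v : (commonNbrs G1 ((s.image (fun p => p.val.1) : Finset V1) : Set V1)) => t1 v.val)
      (fun v : (commonNbrs G2 ((s.image (fun p => p.val.2) : Finset V2) : Set V2)) => t2 v.val)
      (G1.induce _) (G2.induce _)) →g
      ((partiteProd t1 t2 G1 G2).induce (commonNbrs (partiteProd t1 t2 G1 G2) (s : Set _))) :=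
    { toFun := fun q => ⟨⟨(q.val.1.val, q.val.2.val), q.property⟩, hmap q⟩
      map_rel' := fun h => ⟨h.1, h.2⟩ }
  have hsurj : Function.Surjective f := by
    rintro ⟨⟨⟨x1, x2⟩, hx⟩, hmem⟩
    have hx1 : x1 ∈ commonNbrs G1 ((s.image (fun p => p.val.1) : Finset V1) : Set V1) := by
      intro q hq
      obtain ⟨p, hp, rfl⟩ := Finset.mem_image.mp (Finset.mem_coe.mp hq)
      exact (hmem p (Finset.mem_coe.mpr hp)).1
    have hx2 : x2 ∈ commonNbrs G2 ((s.image (fun p => p.val.2) : Finset V2) : Set V2) := by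
      intro q hq
      obtain ⟨p, hp, rfl⟩ := Finset.mem_image.mp (Finset.mem_coe.mp hq)
      exact (hmem p (Finset.mem_coe.mpr hp)).2
    exact ⟨⟨(⟨x1, hx1⟩, ⟨x2, hx2⟩), hx⟩, rfl⟩
  exact SimpleGraph.Connected.map f hsurj hconn

end mainassembly

/-- If `X(G1)` and `X(G2)` are pure `n`-dimensional, `(n+1)`-partite, strongly gallery connected
clique complexes, then so is the clique complex of the partite product `G1 ⊛ G2`; in particular
`G1 ⊛ G2` is connected. -/
theorem stmt3 {V1 V2 : Type*} (n : ℕ) (t1 : V1 → Fin (n + 1)) (t2 : V2 → Fin (n + 1))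
    (G1 : SimpleGraph V1) (G2 : SimpleGraph V2)
    (hp1 : ∀ a b, G1.Adj a b → t1 a ≠ t1 b) (hp2 : ∀ a b, G2.Adj a b → t2 a ≠ t2 b)
    (hpure1 : IsPure G1 n) (hpure2 : IsPure G2 n)
    (hsgc1 : StronglyGalleryConnected G1 n) (hsgc2 : StronglyGalleryConnected G2 n) :
    (∀ x y, (partiteProd t1 t2 G1 G2).Adj x y → t1 x.val.1 ≠ t1 y.val.1) ∧
    IsPure (partiteProd t1 t2 G1 G2) n ∧
    StronglyGalleryConnected (partiteProd t1 t2 G1 G2) n ∧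
    (partiteProd t1 t2 G1 G2).Connected := by
  have hconn : (partiteProd t1 t2 G1 G2).Connected :=
    prodConn hp1 hp2 (extOfPure hp1 hpure1) (extOfPure hp2 hpure2) hsgc1.1 hsgc2.1
  exact ⟨fun x y h => hp1 _ _ h.1, prodPure hp1 hp2 hpure1 hpure2,
    ⟨hconn, fun s hs hcard => prodLink hp1 hp2 hpure1 hpure2 hsgc1 hsgc2 s hs hcard⟩, hconn⟩
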